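/- There exist two finite iCGS G1 and G2 over a single agent and a single atom p, and states q0 ∈ G1, q0' ∈ G2, such that (G1, q0) ⊭ ⟨⟨1⟩⟩ F p and (G2, q0') ⊨ ⟨⟨1⟩⟩ F p under the imperfect-information memoryless (uniform-strategy) semantics, even though there is a relation between them satisfying all conditions of A-simulation except the injectivity condition (2) on common-knowledge neighborhoods. Concretely: G1 has states q0, q1, q2, q3 with q1 ~_1 q2, actions a, b; from q0 both successors q1, q2 are reached; in q1 action a loops and b goes to q3; in q2 action b loops and a goes to q3; p holds only at q3, which is absorbing. Then (G1, q0) ⊭ ⟨⟨1⟩⟩ F p. -/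
import Mathlib


/-- An imperfect-information concurrent game structure (iCGS), given as raw data;
the defining axioms are collected in `iCGS.Valid`. -/
structure iCGS (Ag AP S Act : Type) where
  init : S
  indist : Ag → S → S → Prop
  protocol : Ag → S → Set Act
  trans : S → (Ag → Act) → S → Prop
  label : S → Set AP

namespace iCGS

variable {Ag AP S S' Act Act' : Type}

/-- The axioms of an iCGS. -/
def Valid (G : iCGS Ag AP S Act) : Prop :=
  (∀ i, Equivalence (G.indist i)) ∧
  (∀ i s, (G.protocol i s).Nonempty) ∧
  (∀ i s s', G.indist i s s' → G.protocol i s = G.protocol i s') ∧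
  (∀ s a, (∃ s', G.trans s a s') ↔ ∀ i, a i ∈ G.protocol i s)

/-- Common-knowledge reachability for coalition `A`:
reflexive-transitive closure of the union of the `∼ᵢ`, `i ∈ A`. -/
def ck (G : iCGS Ag AP S Act) (A : Set Ag) : S → S → Prop :=
  Relation.ReflTransGen (fun s s' => ∃ i ∈ A, G.indist i s s')

/-- Common-knowledge neighbourhood `C_A(q)`. -/
def CKN (G : iCGS Ag AP S Act) (A : Set Ag) (q : S) : Set S := {r | G.ck A q r}

/-- "Everybody knows" neighbourhood `E_A(q)`. -/
def EKN (G : iCGS Ag AP S Act) (A : Set Ag) (q : S) : Set S :=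
  {r | ∃ i ∈ A, G.indist i q r}

/-- `σ` is a partial uniform strategy for coalition `A` with domain `Q`. -/
def IsPStrat (G : iCGS Ag AP S Act) (A : Set Ag) (Q : Set S) (σ : Ag → S → Act) : Prop :=
  (∀ i ∈ A, ∀ s ∈ Q, σ i s ∈ G.protocol i s) ∧
  (∀ i ∈ A, ∀ s ∈ Q, ∀ t ∈ Q, G.indist i s t → σ i s = σ i t)

/-- `σ` is a (total) uniform memoryless strategy for coalition `A`. -/
def IsStrat (G : iCGS Ag AP S Act) (A : Set Ag) (σ : Ag → S → Act) : Prop :=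
  G.IsPStrat A Set.univ σ

/-- Successors of `s` under joint actions compatible with `σ` on coalition `A`. -/
def succ (G : iCGS Ag AP S Act) (A : Set Ag) (σ : Ag → S → Act) (s : S) : Set S :=
  {t | ∃ a : Ag → Act, (∀ i ∈ A, a i = σ i s) ∧ G.trans s a t}

/-- Objective outcome set of strategy `σ` at `q` (runs as infinite state sequences). -/
def OutObj (G : iCGS Ag AP S Act) (A : Set Ag) (σ : Ag → S → Act) (q : S) :
    Set (ℕ → S) :=
  {lam | lam 0 = q ∧ ∀ j, lam (j + 1) ∈ G.succ A σ (lam j)}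

/-- Subjective outcome set: union of objective outcomes over states indistinguishable
from `q` for some member of the coalition. -/
def OutSubj (G : iCGS Ag AP S Act) (A : Set Ag) (σ : Ag → S → Act) (q : S) :
    Set (ℕ → S) :=
  {lam | ∃ i ∈ A, ∃ r, G.indist i q r ∧ lam ∈ G.OutObj A σ r}

/-- Outcome set: subjective (`x = true`) or objective (`x = false`).
(For a nonempty coalition the subjective case coincides with the union of
objective outcomes over indistinguishable states, by reflexivity; for the
empty coalition it degenerates to the objective case.) -/
def Out (G : iCGS Ag AP S Act) (x : Bool) (A : Set Ag) (σ : Ag → S → Act) (q : S) :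
    Set (ℕ → S) :=
  if x then G.OutObj A σ q ∪ G.OutSubj A σ q else G.OutObj A σ q

/-- `R` is a simulation for coalition `A` from `G` to `G'` (Def. of simulation):
existence of a strategy simulator over common-knowledge neighbourhoods with
(a) atom agreement, (b) epistemic back-condition, (c) strategy transfer, and
(2) injectivity modulo common-knowledge neighbourhoods. -/
def IsSimulation (G : iCGS Ag AP S Act) (G' : iCGS Ag AP S' Act') (A : Set Ag)
    (R : S → S' → Prop) : Prop :=
  (∃ ST : Set S → Set S' → (Ag → S → Act) → (Ag → S' → Act'),
    ∀ q q', R q q' →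
      (∀ σ, G.IsPStrat A (G.CKN A q) σ →
        G'.IsPStrat A (G'.CKN A q') (ST (G.CKN A q) (G'.CKN A q') σ)) ∧
      (∀ r ∈ G.CKN A q, ∀ r' ∈ G'.CKN A q', R r r' →
        ∀ σ, G.IsPStrat A (G.CKN A q) σ →
          ∀ s' ∈ G'.succ A (ST (G.CKN A q) (G'.CKN A q') σ) r',
            ∃ s ∈ G.succ A σ r, R s s')) ∧
  (∀ q q', R q q' → G.label q = G'.label q') ∧
  (∀ q q', R q q' → ∀ i ∈ A, ∀ r', G'.indist i q' r' →
    ∃ r, G.indist i q r ∧ R r r') ∧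
  (∀ q₁ q₂ q', R q₁ q' → R q₂ q' → G.CKN A q₁ = G.CKN A q₂)

/-- `R` is a bisimulation for `A` iff both `R` and its converse are `A`-simulations. -/
def IsBisimulation (G : iCGS Ag AP S Act) (G' : iCGS Ag AP S' Act') (A : Set Ag)
    (R : S → S' → Prop) : Prop :=
  G.IsSimulation G' A R ∧ G'.IsSimulation G A (fun q' q => R q q')

end iCGS
mutual
/-- State formulas of ATL*. -/
inductive SF (AP Ag : Type) : Type where
  | atom : AP → SF AP Ag
  | neg : SF AP Ag → SF AP Ag
  | imp : SF AP Ag → SF AP Ag → SF AP Ag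
  | coal : Set Ag → PF AP Ag → SF AP Ag
/-- Path formulas of ATL*. -/
inductive PF (AP Ag : Type) : Type where
  | of : SF AP Ag → PF AP Ag
  | neg : PF AP Ag → PF AP Ag
  | imp : PF AP Ag → PF AP Ag → PF AP Ag
  | next : PF AP Ag → PF AP Ag
  | untl : PF AP Ag → PF AP Ag → PF AP Ag
end

variable {Ag AP S Act : Type}

mutual
/-- Satisfaction of ATL* state formulas; `x = true` is the subjective,
`x = false` the objective imperfect-information memoryless semantics. -/
def SSat (G : iCGS Ag AP S Act) (x : Bool) : S → SF AP Ag → Prop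
  | s, .atom p => p ∈ G.label s
  | s, .neg φ => ¬ SSat G x s φ
  | s, .imp φ ψ => SSat G x s φ → SSat G x s ψ
  | s, .coal A ψ =>
      ∃ σ, G.IsStrat A σ ∧ ∀ lam ∈ G.Out x A σ s, PSat G x lam ψ
/-- Satisfaction of ATL* path formulas on runs. -/
def PSat (G : iCGS Ag AP S Act) (x : Bool) : (ℕ → S) → PF AP Ag → Prop
  | lam, .of φ => SSat G x (lam 0) φ
  | lam, .neg ψ => ¬ PSat G x lam ψ
  | lam, .imp ψ χ => PSat G x lam ψ → PSat G x lam χ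
  | lam, .next ψ => PSat G x (fun n => lam (n + 1)) ψ
  | lam, .untl ψ χ => ∃ j, PSat G x (fun n => lam (n + j)) χ ∧
      ∀ k < j, PSat G x (fun n => lam (n + k)) ψ
end

mutual
/-- `φ` is an `A`-formula: `A` is the only coalition occurring in it. -/
def SOnly (A : Set Ag) : SF AP Ag → Prop
  | .atom _ => True
  | .neg φ => SOnly A φ
  | .imp φ ψ => SOnly A φ ∧ SOnly A ψ
  | .coal B ψ => B = A ∧ POnly A ψ
def POnly (A : Set Ag) : PF AP Ag → Prop
  | .of φ => SOnly A φ
  | .neg ψ => POnly A ψ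
  | .imp ψ χ => POnly A ψ ∧ POnly A χ
  | .next ψ => POnly A ψ
  | .untl ψ χ => POnly A ψ ∧ POnly A χ
end

namespace iCGS
variable {Ag AP S S' Act Act' : Type}

/-- Weak simulation: all conditions of an `A`-simulation except the injectivity
condition (2) on common-knowledge neighbourhoods. -/
def IsWeakSimulation (G : iCGS Ag AP S Act) (G' : iCGS Ag AP S' Act') (A : Set Ag)
    (R : S → S' → Prop) : Prop :=
  (∃ ST : Set S → Set S' → (Ag → S → Act) → (Ag → S' → Act'),
    ∀ q q', R q q' →
      (∀ σ, G.IsPStrat A (G.CKN A q) σ →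
        G'.IsPStrat A (G'.CKN A q') (ST (G.CKN A q) (G'.CKN A q') σ)) ∧
      (∀ r ∈ G.CKN A q, ∀ r' ∈ G'.CKN A q', R r r' →
        ∀ σ, G.IsPStrat A (G.CKN A q) σ →
          ∀ s' ∈ G'.succ A (ST (G.CKN A q) (G'.CKN A q') σ) r',
            ∃ s ∈ G.succ A σ r, R s s')) ∧
  (∀ q q', R q q' → G.label q = G'.label q') ∧
  (∀ q q', R q q' → ∀ i ∈ A, ∀ r', G'.indist i q' r' →
    ∃ r, G.indist i q r ∧ R r r')

/-- Weak bisimulation: `R` and its converse are weak simulations. -/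
def IsWeakBisimulation (G : iCGS Ag AP S Act) (G' : iCGS Ag AP S' Act') (A : Set Ag)
    (R : S → S' → Prop) : Prop :=
  G.IsWeakSimulation G' A R ∧ G'.IsWeakSimulation G A (fun q' q => R q q')

end iCGS

/-- The concrete single-agent model `G₁` of the counterexample: states
`q0 = 0, q1 = 1, q2 = 2, q3 = 3`, actions `a = 0, b = 1`, with `q1 ∼₁ q2`;
from `q0` both `q1` and `q2` are reachable (on any action); in `q1` action `a`
loops and `b` goes to `q3`; in `q2` action `b` loops and `a` goes to `q3`;
the atom `p` holds only at the absorbing state `q3`. -/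
def G1ex : iCGS Unit Unit (Fin 4) (Fin 2) where
  init := 0
  indist := fun _ s t =>
    s = t ∨ (s.val = 1 ∧ t.val = 2) ∨ (s.val = 2 ∧ t.val = 1)
  protocol := fun _ _ => Set.univ
  trans := fun s a t =>
    if s.val = 0 then (t.val = 1 ∨ t.val = 2)
    else if s.val = 1 then (if a () = 0 then t = s else t.val = 3)
    else if s.val = 2 then (if a () = 1 then t = s else t.val = 3)
    else t = s
  label := fun s => {_u | s.val = 3}

/-- `F p` as the ATL* path formula `⊤ U p` over a single atom. -/
def Fp : PF Unit Unit :=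
  PF.untl (PF.imp (PF.of (SF.atom ())) (PF.of (SF.atom ()))) (PF.of (SF.atom ()))

/-! ### Auxiliary development for the counterexample -/

/-- Unfolded indistinguishability of `G1ex`. -/
def I1 (s t : Fin 4) : Prop :=
  s = t ∨ (s.val = 1 ∧ t.val = 2) ∨ (s.val = 2 ∧ t.val = 1)

/-- Unfolded indistinguishability of the second model `G2ex`. -/
def I2 (s t : Fin 6) : Prop :=
  s = t ∨ (s.val = 1 ∧ t.val = 4) ∨ (s.val = 4 ∧ t.val = 1) ∨
    (s.val = 2 ∧ t.val = 3) ∨ (s.val = 3 ∧ t.val = 2)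

/-- Unfolded transition relation of `G1ex` (with the single agent's action `d`). -/
def T1 (r : Fin 4) (d : Fin 2) (s : Fin 4) : Prop :=
  if r.val = 0 then (s.val = 1 ∨ s.val = 2)
  else if r.val = 1 then (if d = 0 then s = r else s.val = 3)
  else if r.val = 2 then (if d = 1 then s = r else s.val = 3)
  else s = r

/-- Transition relation of the second model `G2ex`. -/
def T2 (r : Fin 6) (d : Fin 2) (s : Fin 6) : Prop :=
  if r.val = 0 then (s.val = 1 ∨ s.val = 2)
  else if r.val = 1 then (if d = 0 then s.val = 3 else s.val = 5)
  else if r.val = 2 then (if d = 0 then s.val = 5 else s.val = 4)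
  else if r.val = 3 then (if d = 0 then s.val = 3 else s.val = 5)
  else if r.val = 4 then (if d = 0 then s.val = 5 else s.val = 2)
  else s = r

instance : ∀ s t, Decidable (I1 s t) := fun s t => by unfold I1; infer_instance
instance : ∀ s t, Decidable (I2 s t) := fun s t => by unfold I2; infer_instance
instance : ∀ r d s, Decidable (T1 r d s) := fun r d s => by unfold T1; infer_instance
instance : ∀ r d s, Decidable (T2 r d s) := fun r d s => by unfold T2; infer_instance

/-- The second model `G₂` of the counterexample: states `q0' = 0`, `A = 1`, `B = 2`,
`A' = 3`, `B' = 4`, `q3' = 5`, with `A ∼ B'` and `B ∼ A'`. -/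
def G2ex : iCGS Unit Unit (Fin 6) (Fin 2) where
  init := 0
  indist := fun _ => I2
  protocol := fun _ _ => Set.univ
  trans := fun s a t => T2 s (a ()) t
  label := fun s => {_u | s.val = 5}

/-- The weak (bi)simulation relation between `G1ex` and `G2ex`. -/
def Rex (s : Fin 4) (t : Fin 6) : Prop :=
  (s = 0 ∧ t = 0) ∨ (s = 1 ∧ (t = 1 ∨ t = 3)) ∨ (s = 2 ∧ (t = 2 ∨ t = 4)) ∨ (s = 3 ∧ t = 5)

instance : ∀ s t, Decidable (Rex s t) := fun s t => by unfold Rex; infer_instance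

lemma i1_refl : ∀ s, I1 s s := fun s => Or.inl rfl
lemma i1_symm : ∀ s t, I1 s t → I1 t s := by decide
lemma i1_trans : ∀ a b c, I1 a b → I1 b c → I1 a c := by decide
lemma i2_refl : ∀ s, I2 s s := fun s => Or.inl rfl
lemma i2_symm : ∀ s t, I2 s t → I2 t s := by decide
lemma i2_trans : ∀ a b c, I2 a b → I2 b c → I2 a c := by decide
lemma fin2 : ∀ d : Fin 2, d ≠ 0 → d = 1 := by decide

lemma ck_iff {S : Type} (G : iCGS Unit Unit S (Fin 2)) (I : S → S → Prop)
    (hI : ∀ s t, G.indist () s t ↔ I s t) (hrefl : ∀ s, I s s)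
    (htrans : ∀ a b c, I a b → I b c → I a c) (q r : S) :
    G.ck Set.univ q r ↔ I q r := by
  constructor
  · intro h
    induction h with
    | refl => exact hrefl q
    | tail _ hstep ih =>
      obtain ⟨⟨⟩, -, hi⟩ := hstep
      exact htrans _ _ _ ih ((hI _ _).mp hi)
  · intro h
    exact Relation.ReflTransGen.single ⟨(), trivial, (hI _ _).mpr h⟩

lemma mem_CKN1 (q r : Fin 4) : r ∈ G1ex.CKN Set.univ q ↔ I1 q r :=
  ck_iff G1ex I1 (fun _ _ => Iff.rfl) i1_refl i1_trans q r

lemma mem_CKN2 (q r : Fin 6) : r ∈ G2ex.CKN Set.univ q ↔ I2 q r :=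
  ck_iff G2ex I2 (fun _ _ => Iff.rfl) i2_refl i2_trans q r

lemma mem_succ {S : Type} (G : iCGS Unit Unit S (Fin 2)) (T : S → Fin 2 → S → Prop)
    (hT : ∀ s a t, G.trans s a t ↔ T s (a ()) t) (σ : Unit → S → Fin 2) (s t : S) :
    t ∈ G.succ Set.univ σ s ↔ T s (σ () s) t := by
  constructor
  · rintro ⟨a, ha, htr⟩
    have h := (hT _ _ _).mp htr
    rwa [ha () trivial] at h
  · intro h
    exact ⟨fun _ => σ () s, fun i _ => rfl, (hT _ _ _).mpr h⟩

lemma G1ex_valid : G1ex.Valid := by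
  refine ⟨fun i => ⟨fun s => Or.inl rfl, fun h => i1_symm _ _ h, fun h h' => i1_trans _ _ _ h h'⟩,
    fun i s => ⟨0, trivial⟩, fun i s s' _ => rfl, fun s a => iff_of_true ?_ fun i => trivial⟩
  have h : ∀ (r : Fin 4) (d : Fin 2), ∃ s, T1 r d s := by decide
  exact h s (a ())

lemma G2ex_valid : G2ex.Valid := by
  refine ⟨fun i => ⟨fun s => Or.inl rfl, fun h => i2_symm _ _ h, fun h h' => i2_trans _ _ _ h h'⟩,
    fun i s => ⟨0, trivial⟩, fun i s s' _ => rfl, fun s a => iff_of_true ?_ fun i => trivial⟩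
  have h : ∀ (r : Fin 6) (d : Fin 2), ∃ s, T2 r d s := by decide
  exact h s (a ())

lemma uni1 {q : Fin 4} {σ : Unit → Fin 4 → Fin 2}
    (hσ : G1ex.IsPStrat Set.univ (G1ex.CKN Set.univ q) σ) {a b : Fin 4}
    (ha : I1 q a) (hb : I1 q b) (hab : I1 a b) : σ () a = σ () b :=
  hσ.2 () trivial a ((mem_CKN1 q a).mpr ha) b ((mem_CKN1 q b).mpr hb) hab

lemma uni2 {q : Fin 6} {σ : Unit → Fin 6 → Fin 2}
    (hσ : G2ex.IsPStrat Set.univ (G2ex.CKN Set.univ q) σ) {a b : Fin 6}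
    (ha : I2 q a) (hb : I2 q b) (hab : I2 a b) : σ () a = σ () b :=
  hσ.2 () trivial a ((mem_CKN2 q a).mpr ha) b ((mem_CKN2 q b).mpr hb) hab

lemma eback12dec : ∀ (q : Fin 4) (q' r' : Fin 6), Rex q q' → I2 q' r' →
    ∃ r, I1 q r ∧ Rex r r' := by decide

lemma eback21dec : ∀ (q : Fin 4) (q' : Fin 6), Rex q q' → ∀ r, I1 q r →
    ∃ r', I2 q' r' ∧ Rex r r' := by decide

lemma back12dec : ∀ (c d : Fin 2) (r : Fin 4) (r' s' : Fin 6),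
    Rex r r' → T2 r' c s' → ((r.val = 1 ∨ r.val = 2) → d = c) →
    ∃ s, T1 r d s ∧ Rex s s' := by decide

lemma back21dec : ∀ (c d : Fin 2) (r : Fin 4) (r' : Fin 6) (s : Fin 4),
    Rex r r' → T1 r c s →
    ((r'.val = 1 ∨ r'.val = 2 ∨ r'.val = 3 ∨ r'.val = 4) → d = c) →
    ∃ s', T2 r' d s' ∧ Rex s s' := by decide

lemma labeldec : ∀ (q : Fin 4) (q' : Fin 6), Rex q q' → (q.val = 3 ↔ q'.val = 5) := by decide
open Classical in
/-- Strategy translation from `G2ex` to `G1ex`: play the (uniform) action that the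
`G2ex`-strategy plays on the relevant common-knowledge neighbourhood. -/
noncomputable def STrev : Set (Fin 6) → Set (Fin 4) → (Unit → Fin 6 → Fin 2) →
    (Unit → Fin 4 → Fin 2) :=
  fun Q _ σ _ _ =>
    if (1 : Fin 6) ∈ Q then σ () 1 else if (2 : Fin 6) ∈ Q then σ () 2 else σ () 0

lemma STrev_eq1 (Q : Set (Fin 6)) (Q₁ : Set (Fin 4)) (σ : Unit → Fin 6 → Fin 2)
    (h : (1 : Fin 6) ∈ Q) : STrev Q Q₁ σ = fun _ _ => σ () 1 := by
  funext i s; unfold STrev; rw [if_pos h]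

lemma STrev_eq2 (Q : Set (Fin 6)) (Q₁ : Set (Fin 4)) (σ : Unit → Fin 6 → Fin 2)
    (h1 : (1 : Fin 6) ∉ Q) (h2 : (2 : Fin 6) ∈ Q) : STrev Q Q₁ σ = fun _ _ => σ () 2 := by
  funext i s; unfold STrev; rw [if_neg h1, if_pos h2]

lemma weak_bisim : G1ex.IsWeakBisimulation G2ex Set.univ Rex := by
  constructor
  · refine ⟨⟨fun _ _ σ _ _ => σ () 1, ?_⟩, ?_, ?_⟩
    · intro q q' hqq'
      refine ⟨fun σ hσ => ⟨fun i _ s _ => trivial, fun i _ s _ t _ _ => rfl⟩, ?_⟩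
      intro r hr r' hr' hR σ hσ s' hs'
      have hT2 : T2 r' (σ () 1) s' :=
        (mem_succ G2ex T2 (fun _ _ _ => Iff.rfl) _ r' s').mp hs'
      have hd : (r.val = 1 ∨ r.val = 2) → σ () r = σ () 1 := by
        intro hc
        have hqr : I1 q r := (mem_CKN1 q r).mp hr
        have hr12 : r = 1 ∨ r = 2 := by
          rcases hc with h | h
          · exact Or.inl (Fin.ext h)
          · exact Or.inr (Fin.ext h)
        rcases hr12 with rfl | rfl
        · rfl
        · have h1 : I1 q 1 := i1_trans q 2 1 hqr (by decide)
          exact uni1 hσ hqr h1 (by decide)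
      obtain ⟨s, hsT, hRs⟩ := back12dec (σ () 1) (σ () r) r r' s' hR hT2 hd
      exact ⟨s, (mem_succ G1ex T1 (fun _ _ _ => Iff.rfl) σ r s).mpr hsT, hRs⟩
    · intro q q' hqq'
      ext u
      exact labeldec q q' hqq'
    · rintro q q' hqq' ⟨⟩ - r' h'
      exact eback12dec q q' r' hqq' h'
  · refine ⟨⟨STrev, ?_⟩, ?_, ?_⟩
    · intro q' q hq'q
      refine ⟨fun σ hσ => ⟨fun i _ s _ => trivial, ?_⟩, ?_⟩
      · intro i _ s _ t _ _
        show STrev _ _ σ i s = STrev _ _ σ i t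
        rfl
      · intro b hb a ha hR σ hσ s hs
        have hT1 : T1 a (STrev (G2ex.CKN Set.univ q') (G1ex.CKN Set.univ q) σ () a) s :=
          (mem_succ G1ex T1 (fun _ _ _ => Iff.rfl) _ a s).mp hs
        set c := STrev (G2ex.CKN Set.univ q') (G1ex.CKN Set.univ q) σ () a with hcv
        have hq'b : I2 q' b := (mem_CKN2 q' b).mp hb
        have hlink : (b.val = 1 ∨ b.val = 2 ∨ b.val = 3 ∨ b.val = 4) → σ () b = c := by
          intro hc
          have hb14 : b = 1 ∨ b = 2 ∨ b = 3 ∨ b = 4 := by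
            rcases hc with h | h | h | h
            exacts [Or.inl (Fin.ext h), Or.inr (Or.inl (Fin.ext h)),
              Or.inr (Or.inr (Or.inl (Fin.ext h))), Or.inr (Or.inr (Or.inr (Fin.ext h)))]
          have hval1 : ∀ hq1 : I2 q' 1, c = σ () 1 := by
            intro hq1
            rw [hcv, STrev_eq1 _ _ _ ((mem_CKN2 q' 1).mpr hq1)]
          have hval2 : ∀ _hn : ¬ I2 q' 1, ∀ _hq2 : I2 q' 2, c = σ () 2 := by
            intro hn hq2
            rw [hcv, STrev_eq2 _ _ _ (fun hmem => hn ((mem_CKN2 q' 1).mp hmem))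
              ((mem_CKN2 q' 2).mpr hq2)]
          rcases hb14 with rfl | rfl | rfl | rfl
          · rw [hval1 hq'b]
          · have hn1 : ¬ I2 q' 1 := by
              have : ∀ x : Fin 6, I2 x 2 → ¬ I2 x 1 := by decide
              exact this q' hq'b
            rw [hval2 hn1 hq'b]
          · have hq2 : I2 q' 2 := i2_trans q' 3 2 hq'b (by decide)
            have hn1 : ¬ I2 q' 1 := by
              have : ∀ x : Fin 6, I2 x 3 → ¬ I2 x 1 := by decide
              exact this q' hq'b
            rw [hval2 hn1 hq2]
            exact uni2 hσ hq'b hq2 (by decide)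
          · have hq1 : I2 q' 1 := i2_trans q' 4 1 hq'b (by decide)
            rw [hval1 hq1]
            exact uni2 hσ hq'b hq1 (by decide)
        obtain ⟨s', hs'T, hRs⟩ := back21dec c (σ () b) a b s hR hT1 hlink
        exact ⟨s', (mem_succ G2ex T2 (fun _ _ _ => Iff.rfl) σ b s').mpr hs'T, hRs⟩
    · intro q' q hq'q
      ext u
      exact Iff.symm (labeldec q q' hq'q)
    · rintro q' q hq'q ⟨⟩ - r h
      exact eback21dec q q' hq'q r h
lemma G1_fail (x : Bool) : ¬ SSat G1ex x 0 (SF.coal Set.univ Fp) := by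
  rintro ⟨σ, hσ, hall⟩
  set w : Fin 4 := if σ () 1 = 0 then 1 else 2 with hw
  set lam : ℕ → Fin 4 := fun n => if n = 0 then 0 else w with hlam
  have hwval : w = 1 ∨ w = 2 := by
    rw [hw]; split
    · exact Or.inl rfl
    · exact Or.inr rfl
  have huni : σ () 2 = σ () 1 :=
    (hσ.2 () trivial 1 trivial 2 trivial (Or.inr (Or.inl ⟨rfl, rfl⟩))).symm
  have hobj : lam ∈ G1ex.OutObj Set.univ σ 0 := by
    refine ⟨rfl, fun j => ?_⟩
    refine (mem_succ G1ex T1 (fun _ _ _ => Iff.rfl) σ _ _).mpr ?_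
    cases j with
    | zero =>
      show T1 (lam 0) (σ () (lam 0)) (lam 1)
      have e0 : lam 0 = 0 := rfl
      have e1 : lam 1 = w := rfl
      rw [e0, e1]
      rcases hwval with h | h <;> rw [h]
      · exact Or.inl rfl
      · exact Or.inr rfl
    | succ n =>
      show T1 (lam (n + 1)) (σ () (lam (n + 1))) (lam (n + 1 + 1))
      have e1 : lam (n + 1) = w := rfl
      have e2 : lam (n + 1 + 1) = w := rfl
      rw [e1, e2]
      by_cases h : σ () 1 = 0
      · have hw1 : w = 1 := by rw [hw, if_pos h]
        rw [hw1]
        have step1 : ∀ d : Fin 2, d = 0 → T1 1 d 1 := by decide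
        exact step1 _ h
      · have hw2 : w = 2 := by rw [hw, if_neg h]
        rw [hw2]
        have step2 : ∀ d : Fin 2, d = 1 → T1 2 d 2 := by decide
        exact step2 _ (by rw [huni]; exact fin2 _ h)
  have hmem : lam ∈ G1ex.Out x Set.univ σ 0 := by
    cases x
    · exact hobj
    · exact Or.inl hobj
  have hP : ∃ j, PSat G1ex x (fun n => lam (n + j)) (PF.of (SF.atom ())) ∧
      ∀ k < j, PSat G1ex x (fun n => lam (n + k))
        (PF.imp (PF.of (SF.atom ())) (PF.of (SF.atom ()))) := hall lam hmem
  obtain ⟨j, hj, -⟩ := hP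
  have hj' : (lam (0 + j)).val = 3 := hj
  have hcase : lam (0 + j) = 0 ∨ lam (0 + j) = w := by
    have e : lam (0 + j) = if 0 + j = 0 then 0 else w := rfl
    rw [e]
    by_cases h : (0 + j) = 0
    · rw [if_pos h]; exact Or.inl rfl
    · rw [if_neg h]; exact Or.inr rfl
  rcases hcase with h | h <;> rw [h] at hj'
  · exact absurd hj' (by decide)
  · rcases hwval with h2 | h2 <;> rw [h2] at hj' <;> exact absurd hj' (by decide)

/-- The winning uniform strategy in `G2ex`. -/
def sigmaStar : Unit → Fin 6 → Fin 2 := fun _ s => if s.val = 1 ∨ s.val = 4 then 0 else 1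

lemma sigmaStar_uni : ∀ s t : Fin 6, I2 s t → sigmaStar () s = sigmaStar () t := by decide

lemma sigmaStar_strat : G2ex.IsStrat Set.univ sigmaStar :=
  ⟨fun i _ s _ => trivial, fun i _ s _ t _ h => by cases i; exact sigmaStar_uni s t h⟩

lemma G2_run (lam : ℕ → Fin 6) (h : lam ∈ G2ex.OutObj Set.univ sigmaStar 0) :
    lam 3 = 5 := by
  obtain ⟨h0, hs⟩ := h
  have h1 : T2 (lam 0) (sigmaStar () (lam 0)) (lam 1) :=
    (mem_succ G2ex T2 (fun _ _ _ => Iff.rfl) _ _ _).mp (hs 0)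
  have h2 : T2 (lam 1) (sigmaStar () (lam 1)) (lam 2) :=
    (mem_succ G2ex T2 (fun _ _ _ => Iff.rfl) _ _ _).mp (hs 1)
  have h3 : T2 (lam 2) (sigmaStar () (lam 2)) (lam 3) :=
    (mem_succ G2ex T2 (fun _ _ _ => Iff.rfl) _ _ _).mp (hs 2)
  rw [h0] at h1
  have step : ∀ a b : Fin 6, T2 a (sigmaStar () a) b →
      (a = 0 → b = 1 ∨ b = 2) ∧ (a = 1 → b = 3) ∧ (a = 2 → b = 4) ∧
      (a = 3 → b = 5) ∧ (a = 4 → b = 5) := by decide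
  rcases (step 0 (lam 1) h1).1 rfl with h | h <;> rw [h] at h2
  · have e2 : lam 2 = 3 := (step 1 (lam 2) h2).2.1 rfl
    rw [e2] at h3
    exact (step 3 (lam 3) h3).2.2.2.1 rfl
  · have e2 : lam 2 = 4 := (step 2 (lam 2) h2).2.2.1 rfl
    rw [e2] at h3
    exact (step 4 (lam 3) h3).2.2.2.2 rfl

lemma G2_sat (x : Bool) : SSat G2ex x 0 (SF.coal Set.univ Fp) := by
  show ∃ σ, G2ex.IsStrat Set.univ σ ∧
    ∀ lam ∈ G2ex.Out x Set.univ σ 0, PSat G2ex x lam Fp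
  refine ⟨sigmaStar, sigmaStar_strat, fun lam hmem => ?_⟩
  have hobj : lam ∈ G2ex.OutObj Set.univ sigmaStar 0 := by
    cases x
    · exact hmem
    · have hmem' : lam ∈ G2ex.OutObj Set.univ sigmaStar 0 ∪
        G2ex.OutSubj Set.univ sigmaStar 0 := hmem
      rcases hmem' with h | h
      · exact h
      · obtain ⟨i, -, r, hr, hO⟩ := h
        cases i
        have hr0 : r = 0 := by
          have hd : ∀ r : Fin 6, I2 0 r → r = 0 := by decide
          exact hd r hr
        rwa [hr0] at hO
  have h5 := G2_run lam hobj
  show ∃ j, PSat G2ex x (fun n => lam (n + j)) (PF.of (SF.atom ())) ∧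
    ∀ k < j, PSat G2ex x (fun n => lam (n + k))
      (PF.imp (PF.of (SF.atom ())) (PF.of (SF.atom ())))
  refine ⟨3, ?_, fun k _ h => h⟩
  show (lam (0 + 3)).val = 5
  rw [show (0 + 3 : ℕ) = 3 from rfl, h5]
  decide
/-- there are two finite single-agent iCGS related by a relation
satisfying all conditions of `A`-simulation (in both directions) except the
injectivity condition (2), which nevertheless disagree on `⟨⟨1⟩⟩F p` under the
imperfect-information memoryless uniform-strategy semantics (both variants);
moreover, concretely, `(G₁, q0) ⊭ ⟨⟨1⟩⟩F p`. -/
theorem weak_bisimulation_does_not_preserve :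
    (∃ (S₁ S₂ : Type) (_ : Fintype S₁) (_ : Fintype S₂)
      (G₁ : iCGS Unit Unit S₁ (Fin 2)) (G₂ : iCGS Unit Unit S₂ (Fin 2))
      (q₀ : S₁) (q₀' : S₂) (R : S₁ → S₂ → Prop),
      G₁.Valid ∧ G₂.Valid ∧
      G₁.IsWeakBisimulation G₂ Set.univ R ∧ R q₀ q₀' ∧
      ∀ x : Bool,
        ¬ SSat G₁ x q₀ (SF.coal Set.univ Fp) ∧
        SSat G₂ x q₀' (SF.coal Set.univ Fp)) ∧
    (∀ x : Bool, ¬ SSat G1ex x 0 (SF.coal Set.univ Fp)) := by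
  refine ⟨⟨Fin 4, Fin 6, inferInstance, inferInstance, G1ex, G2ex, 0, 0, Rex,
    G1ex_valid, G2ex_valid, weak_bisim, Or.inl ⟨rfl, rfl⟩,
    fun x => ⟨G1_fail x, G2_sat x⟩⟩, G1_fail⟩
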